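/- Let ν > −1/2 with ν ≠ 0, let ε be real with 0 < ε < ν + 1/2, and let n ≥ 0 be an integer. Then ∫_{−1}^{1} P^{(ν)}_n(x)·(1−x²)^{ν−1/2}·(1−x)^{−ε} dx = P^{(ν)}_n(1) · 2^{2ν−ε}·Γ(ν+1/2)·Γ(ν−ε+1/2)·Γ(n+ε) / (Γ(ε)·Γ(n+2ν−ε+1)), where Γ is the Gamma function and the left-hand side is a Lebesgue integral over [−1,1]. -/

import Mathlib

open Polynomial Filter MeasureTheory
open intervalIntegral Finset

noncomputable section

/-- Recurrence coefficients `β_k = k(k+2ν−1)/(4(k+ν)(k+ν−1))` of the monic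
ultraspherical polynomials. -/
def ultraBeta (ν : ℝ) (k : ℕ) : ℝ :=
  k * (k + 2 * ν - 1) / (4 * (k + ν) * (k + ν - 1))

/-- Monic ultraspherical polynomials `P^{(ν)}_0 = 1`, `P^{(ν)}_1 = X`,
`P^{(ν)}_{k+1} = X·P^{(ν)}_k − β_k·P^{(ν)}_{k−1}`. -/
def ultraP (ν : ℝ) : ℕ → Polynomial ℝ
  | 0 => 1
  | 1 => X
  | (k + 2) => X * ultraP ν (k + 1) - C (ultraBeta ν (k + 1)) * ultraP ν k

/-- First-order numerator polynomials `Q^{(ν)}_0 = 1`, `Q^{(ν)}_1 = X`,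
`Q^{(ν)}_{k+1} = X·Q^{(ν)}_k − β_{k+1}·Q^{(ν)}_{k−1}`. -/
def ultraQ (ν : ℝ) : ℕ → Polynomial ℝ
  | 0 => 1
  | 1 => X
  | (k + 2) => X * ultraQ ν (k + 1) - C (ultraBeta ν (k + 2)) * ultraQ ν k

/-- Co-dilated ultraspherical polynomials: same recurrence as `ultraP ν`, except that
the single coefficient `β_1` is replaced by `λ·β_1`. -/
def ultraPstar (ν lam : ℝ) : ℕ → Polynomial ℝ
  | 0 => 1
  | 1 => X
  | (k + 2) => X * ultraPstar ν lam (k + 1) -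
      C (if k + 1 = 1 then lam * ultraBeta ν 1 else ultraBeta ν (k + 1)) * ultraPstar ν lam k


private lemma real_beta {a b : ℝ} (ha : 0 < a) (hb : 0 < b) :
    ∫ x in (0:ℝ)..1, x ^ (a - 1) * (1 - x) ^ (b - 1) =
      Real.Gamma a * Real.Gamma b / Real.Gamma (a + b) := by
  have h := Complex.Gamma_mul_Gamma_eq_betaIntegral (s := (a:ℂ)) (t := (b:ℂ))
    (by simpa using ha) (by simpa using hb)
  have hcast : Complex.betaIntegral a b =
      ((∫ x in (0:ℝ)..1, x ^ (a - 1) * (1 - x) ^ (b - 1) : ℝ) : ℂ) := by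
    rw [Complex.betaIntegral, ← intervalIntegral.integral_ofReal]
    refine intervalIntegral.integral_congr fun x hx => ?_
    rw [Set.uIcc_of_le (by norm_num : (0:ℝ) ≤ 1)] at hx
    push_cast
    rw [Complex.ofReal_cpow hx.1 (a - 1), Complex.ofReal_cpow (by linarith [hx.2]) (b - 1)]
    push_cast
    ring
  rw [hcast, ← Complex.ofReal_add, Complex.Gamma_ofReal, Complex.Gamma_ofReal,
    Complex.Gamma_ofReal, ← Complex.ofReal_mul, ← Complex.ofReal_mul] at h
  have h' := Complex.ofReal_injective h
  have hne : Real.Gamma (a + b) ≠ 0 := (Real.Gamma_pos_of_pos (by linarith)).ne'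
  field_simp
  linarith [h']


private lemma weight_ii {p q : ℝ} (hp : -1 < p) (hq : -1 < q) :
    IntervalIntegrable (fun x => (1 - x) ^ p * (1 + x) ^ q) volume (-1) 1 := by
  have h1 : IntervalIntegrable (fun x => (1 - x) ^ p * (1 + x) ^ q) volume 0 1 := by
    have hi : IntervalIntegrable (fun x : ℝ => (1 - x) ^ p) volume 0 1 := by
      have := (intervalIntegrable_rpow' (a := (0:ℝ)) (b := 1) hp).comp_sub_left 1
      norm_num at this
      exact this.symm
    refine hi.mul_continuousOn ?_
    refine ContinuousOn.rpow_const (by fun_prop) fun x hx => Or.inl ?_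
    rw [Set.uIcc_of_le (by norm_num : (0:ℝ) ≤ 1)] at hx
    nlinarith [hx.1]
  have h2 : IntervalIntegrable (fun x => (1 - x) ^ p * (1 + x) ^ q) volume (-1) 0 := by
    have hi : IntervalIntegrable (fun x : ℝ => (1 + x) ^ q) volume (-1) 0 := by
      have := (intervalIntegrable_rpow' (a := (0:ℝ)) (b := 1) hq).comp_sub_right (-1)
      norm_num at this
      have h' : (fun x : ℝ => (x + 1) ^ q) = fun x : ℝ => (1 + x) ^ q := by
        funext x; rw [add_comm]
      rwa [h'] at this
    refine hi.continuousOn_mul ?_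
    refine ContinuousOn.rpow_const (by fun_prop) fun x hx => Or.inl ?_
    rw [Set.uIcc_of_le (by norm_num : (-1:ℝ) ≤ 0)] at hx
    nlinarith [hx.2]
  exact h2.trans h1


private lemma poly_weight_ii (f : ℝ[X]) {p q : ℝ} (hp : -1 < p) (hq : -1 < q) :
    IntervalIntegrable (fun x => f.eval x * ((1 - x) ^ p * (1 + x) ^ q)) volume (-1) 1 :=
  (weight_ii hp hq).continuousOn_mul (f.continuous_aeval.continuousOn)


private lemma weight_integral {p q : ℝ} (hp : -1 < p) (hq : -1 < q) :
    ∫ x in (-1:ℝ)..1, (1 - x) ^ p * (1 + x) ^ q =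
      2 ^ (p + q + 1) * Real.Gamma (q + 1) * Real.Gamma (p + 1) / Real.Gamma (p + q + 2) := by
  have h := intervalIntegral.integral_comp_mul_add
    (f := fun x => (1 - x) ^ p * (1 + x) ^ q) (a := (0:ℝ)) (b := 1) (c := 2)
    (by norm_num) (-1)
  norm_num at h
  have h2 : (∫ t in (0:ℝ)..1, (1 - (2 * t + -1)) ^ p * (2 * t) ^ q)
      = 2 ^ p * 2 ^ q * ∫ t in (0:ℝ)..1, t ^ q * (1 - t) ^ p := by
    rw [← intervalIntegral.integral_const_mul]
    refine intervalIntegral.integral_congr fun t ht => ?_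
    rw [Set.uIcc_of_le (by norm_num : (0:ℝ) ≤ 1)] at ht
    have e1 : (1 : ℝ) - (2 * t + -1) = 2 * (1 - t) := by ring
    rw [e1, Real.mul_rpow (by norm_num) (by linarith [ht.2]),
      Real.mul_rpow (by norm_num) ht.1]
    ring
  have hbeta := real_beta (a := q + 1) (b := p + 1) (by linarith) (by linarith)
  norm_num at hbeta
  rw [show q + 1 + (p + 1) = p + q + 2 by ring] at hbeta
  rw [h2, hbeta] at h
  have e4 : (2:ℝ) ^ (p + q + 1) = 2 ^ p * 2 ^ q * 2 := by
    rw [show p + q + 1 = p + (q + 1) by ring, Real.rpow_add (by norm_num),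
      Real.rpow_add (by norm_num), Real.rpow_one]
    ring
  have h5 : (∫ x in (-1:ℝ)..1, (1 - x) ^ p * (1 + x) ^ q)
      = 2 * (2 ^ p * 2 ^ q *
        (Real.Gamma (q + 1) * Real.Gamma (p + 1) / Real.Gamma (p + q + 2))) := by linarith
  rw [h5, e4]; ring


private lemma integral_X_mul (f : ℝ[X]) {p q : ℝ} (hp : -1 < p) (hq : -1 < q) :
    ∫ x in (-1:ℝ)..1, (x * f.eval x) * ((1 - x) ^ p * (1 + x) ^ q) =
      (∫ x in (-1:ℝ)..1, f.eval x * ((1 - x) ^ p * (1 + x) ^ q)) -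
        ∫ x in (-1:ℝ)..1, f.eval x * ((1 - x) ^ (p + 1) * (1 + x) ^ q) := by
  rw [← intervalIntegral.integral_sub (poly_weight_ii f hp hq)
    (poly_weight_ii f (by linarith) hq)]
  refine intervalIntegral.integral_congr fun x hx => ?_
  rw [Set.uIcc_of_le (by norm_num : (-1:ℝ) ≤ 1)] at hx
  rcases eq_or_lt_of_le hx.2 with h1 | h1
  · subst h1
    norm_num
    rw [Real.zero_rpow (by linarith : p + 1 ≠ 0)]
    ring
  · rw [Real.rpow_add_one (by linarith : (1:ℝ) - x ≠ 0) p]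
    ring


private lemma Gamma_add_nat {x : ℝ} (hx : 0 < x) (n : ℕ) :
    Real.Gamma (x + n) = Real.Gamma x * ∏ i ∈ Finset.range n, (x + i) := by
  induction n with
  | zero => simp
  | succ k ih =>
    have e : x + (k + 1 : ℕ) = (x + k) + 1 := by push_cast; ring
    have hk : x + (k:ℝ) ≠ 0 := by positivity
    rw [e, Real.Gamma_add_one hk, ih, Finset.prod_range_succ]; ring


private lemma nu_add_ne {ν : ℝ} (hν : -(1/2) < ν) (hν₀ : ν ≠ 0) (n : ℕ) : ν + (n:ℝ) ≠ 0 := by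
  cases n with
  | zero => simpa using hν₀
  | succ k =>
    have h : (0:ℝ) ≤ k := Nat.cast_nonneg k
    push_cast
    intro hc; linarith



private lemma key_alg {g Γ1 Γ2 Γ3 A B D E m ν ε : ℝ} (hΓ3 : Γ3 ≠ 0) (hD : D ≠ 0) (hE : E ≠ 0)
    (h5 : 2 * ν - ε + 1 ≠ 0) (hn0 : ν + m ≠ 0) (hn1 : ν + m + 1 ≠ 0)
    (hEn1 : 2 * ν - ε + 1 + m ≠ 0) (hEn2 : 2 * ν - ε + 2 + m ≠ 0) :
    g * Γ1 * Γ2 / Γ3 * (A * (2 * ν + m) * (B * (ε + m)) / (D * (2 * (ν + m)) * (E * (2 * ν - ε + 1 + m)))) -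
        g * 2 * Γ1 * ((ν - ε + 1 / 2) * Γ2) / ((2 * ν - ε + 1) * Γ3) *
          (A * (2 * ν + m) * ((ε - 1) * B) /
            (D * (2 * (ν + m)) * (E * (2 * ν - ε + 1 + m) * (2 * ν - ε + 2 + m) / (2 * ν - ε + 1)))) -
      (m + 1) * (m + 2 * ν) / (4 * (ν + m + 1) * (ν + m)) * (g * Γ1 * Γ2 / Γ3 * (A * B / (D * E))) =
    g * Γ1 * Γ2 / Γ3 *
      (A * (2 * ν + m) * (2 * ν + (m + 1)) * (B * (ε + m) * (ε + (m + 1))) /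
        (D * (2 * (ν + m)) * (2 * (ν + (m + 1))) * (E * (2 * ν - ε + 1 + m) * (2 * ν - ε + 1 + (m + 1))))) := by
  have h2 : (2 * (ν + m)) ≠ 0 := mul_ne_zero two_ne_zero hn0
  have h3 : (2 * (ν + (m+1))) ≠ 0 := by
    refine mul_ne_zero two_ne_zero ?_
    intro h; apply hn1; linarith
  have hEn1' : 2 * ν - ε + 1 + (m + 1) ≠ 0 := by intro h; apply hEn2; linarith
  have hn1' : ν + (m + 1) ≠ 0 := by intro h; apply hn1; linarith
  field_simp
  ring



private lemma key (ν : ℝ) (hν : -(1/2) < ν) (hν₀ : ν ≠ 0) :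
    ∀ n : ℕ, ∀ ε : ℝ, ε < ν + 1/2 →
    (∫ x in (-1:ℝ)..1,
        (ultraP ν n).eval x * ((1 - x) ^ (ν - 1/2 - ε) * (1 + x) ^ (ν - 1/2))) =
      2 ^ (2*ν - ε) * Real.Gamma (ν + 1/2) * Real.Gamma (ν - ε + 1/2) /
          Real.Gamma (2*ν - ε + 1) *
        ((∏ i ∈ range n, (2*ν + i)) * (∏ i ∈ range n, (ε + i)) /
         ((∏ i ∈ range n, (2*(ν + i))) * (∏ i ∈ range n, (2*ν - ε + 1 + i)))) := by
  intro n
  induction n using Nat.twoStepInduction with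
  | zero =>
    intro ε hε
    have h := weight_integral (p := ν - 1/2 - ε) (q := ν - 1/2) (by linarith) (by linarith)
    simp only [ultraP, Polynomial.eval_one, one_mul, range_zero, prod_empty]
    rw [h, show ν - 1/2 - ε + (ν - 1/2) + 1 = 2*ν - ε by ring,
      show ν - 1/2 + 1 = ν + 1/2 by ring, show ν - 1/2 - ε + 1 = ν - ε + 1/2 by ring,
      show ν - 1/2 - ε + (ν - 1/2) + 2 = 2*ν - ε + 1 by ring]
    ring
  | one =>
    intro ε hε
    have hp : (-1:ℝ) < ν - 1/2 - ε := by linarith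
    have hq : (-1:ℝ) < ν - 1/2 := by linarith
    have h2pos : (0:ℝ) < ν - ε + 1/2 := by linarith
    have h3pos : (0:ℝ) < 2*ν - ε + 1 := by linarith
    have hΓ3 : Real.Gamma (2*ν - ε + 1) ≠ 0 := (Real.Gamma_pos_of_pos h3pos).ne'
    have hXm := integral_X_mul (1:ℝ[X]) hp hq
    simp only [Polynomial.eval_one, mul_one, one_mul] at hXm
    have hint : (∫ x in (-1:ℝ)..1,
        (ultraP ν 1).eval x * ((1 - x) ^ (ν - 1/2 - ε) * (1 + x) ^ (ν - 1/2))) =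
        ∫ x in (-1:ℝ)..1, x * ((1 - x) ^ (ν - 1/2 - ε) * (1 + x) ^ (ν - 1/2)) := by
      refine intervalIntegral.integral_congr fun x hx => ?_
      simp [ultraP]
    rw [hint, hXm, weight_integral hp hq, weight_integral (by linarith : (-1:ℝ) < ν - 1/2 - ε + 1) hq]
    rw [show ν - 1/2 - ε + (ν - 1/2) + 1 = 2*ν - ε by ring,
      show ν - 1/2 + 1 = ν + 1/2 by ring, show ν - 1/2 - ε + 1 = ν - ε + 1/2 by ring,
      show ν - 1/2 - ε + (ν - 1/2) + 2 = 2*ν - ε + 1 by ring,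
      show ν - ε + 1/2 + (ν - 1/2) + 1 = (2*ν - ε) + 1 by ring,
      show ν - ε + 1/2 + 1 = (ν - ε + 1/2) + 1 by ring,
      show ν - ε + 1/2 + (ν - 1/2) + 2 = (2*ν - ε + 1) + 1 by ring,
      Real.rpow_add (by norm_num : (0:ℝ) < 2), Real.rpow_one,
      Real.Gamma_add_one h2pos.ne', Real.Gamma_add_one h3pos.ne']
    simp only [prod_range_one]
    have h2ν : (2:ℝ)*ν ≠ 0 := by simpa using hν₀
    norm_num
    set_option maxHeartbeats 2000000 in field_simp
    set_option maxHeartbeats 2000000 in ring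
  | more n ih ih1 =>
    intro ε hε
    have hp : (-1:ℝ) < ν - 1/2 - ε := by linarith
    have hq : (-1:ℝ) < ν - 1/2 := by linarith
    have h2pos : (0:ℝ) < ν - ε + 1/2 := by linarith
    have h3pos : (0:ℝ) < 2*ν - ε + 1 := by linarith
    have hΓ3 : Real.Gamma (2*ν - ε + 1) ≠ 0 := (Real.Gamma_pos_of_pos h3pos).ne'
    have e : Set.EqOn
        (fun x : ℝ => (ultraP ν (n+2)).eval x *
          ((1 - x) ^ (ν - 1/2 - ε) * (1 + x) ^ (ν - 1/2)))
        (fun x : ℝ => (x * (ultraP ν (n+1)).eval x) *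
            ((1 - x) ^ (ν - 1/2 - ε) * (1 + x) ^ (ν - 1/2)) -
          ultraBeta ν (n+1) * ((ultraP ν n).eval x *
            ((1 - x) ^ (ν - 1/2 - ε) * (1 + x) ^ (ν - 1/2))))
        (Set.uIcc (-1) 1) := by
      intro x _
      simp only [ultraP, eval_sub, eval_mul, eval_X, eval_C]
      ring
    rw [intervalIntegral.integral_congr e]
    have hI1 : IntervalIntegrable (fun x => (x * (ultraP ν (n+1)).eval x) *
        ((1 - x) ^ (ν - 1/2 - ε) * (1 + x) ^ (ν - 1/2))) volume (-1) 1 := by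
      have := poly_weight_ii (X * ultraP ν (n+1)) hp hq
      simpa only [eval_mul, eval_X] using this
    have hI2 := (poly_weight_ii (ultraP ν n) hp hq).const_mul (ultraBeta ν (n+1))
    rw [intervalIntegral.integral_sub hI1 hI2, intervalIntegral.integral_const_mul,
      integral_X_mul (ultraP ν (n+1)) hp hq,
      show ν - 1/2 - ε + 1 = ν - 1/2 - (ε - 1) by ring,
      ih1 ε hε, ih1 (ε - 1) (by linarith), ih ε hε,
      show 2*ν - (ε - 1) = (2*ν - ε) + 1 by ring,
      show ν - (ε - 1) + 1/2 = (ν - ε + 1/2) + 1 by ring,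
      Real.rpow_add (by norm_num : (0:ℝ) < 2), Real.rpow_one,
      Real.Gamma_add_one h2pos.ne', Real.Gamma_add_one h3pos.ne']
    have hB' : (∏ i ∈ range (n+1), (ε - 1 + (i:ℝ)))
        = (ε - 1) * ∏ i ∈ range n, (ε + (i:ℝ)) := by
      rw [Finset.prod_range_succ' (fun i => ε - 1 + (i:ℝ)) n,
        Finset.prod_congr rfl
          (fun i _ => show ε - 1 + ((i+1 : ℕ):ℝ) = ε + (i:ℝ) by push_cast; ring)]
      push_cast; ring
    have h5 : (2*ν - ε + 1) ≠ 0 := h3pos.ne'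
    have hE' : (∏ i ∈ range (n+1), (2*ν - ε + 1 + 1 + (i:ℝ)))
        = (∏ i ∈ range n, (2*ν - ε + 1 + (i:ℝ))) * (2*ν - ε + 1 + n) *
            (2*ν - ε + 2 + n) / (2*ν - ε + 1) := by
      rw [eq_div_iff h5]
      have h1 := Finset.prod_range_succ' (fun i => 2*ν - ε + 1 + (i:ℝ)) (n+1)
      rw [Finset.prod_congr rfl
          (fun i _ => show 2*ν - ε + 1 + ((i+1:ℕ):ℝ) = 2*ν - ε + 1 + 1 + (i:ℝ) by
            push_cast; ring),
        Finset.prod_range_succ, Finset.prod_range_succ] at h1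
      push_cast at h1 ⊢
      linear_combination - h1
    rw [hB', hE']
    simp only [Finset.prod_range_succ]
    have hβ : ultraBeta ν (n+1) = ((n:ℝ)+1) * ((n:ℝ) + 2*ν) / (4 * (ν + n + 1) * (ν + n)) := by
      simp only [ultraBeta]; push_cast; ring
    rw [hβ]
    push_cast
    have hn0 : ν + (n:ℝ) ≠ 0 := nu_add_ne hν hν₀ n
    have hn1 : ν + (n:ℝ) + 1 ≠ 0 := by
      have := nu_add_ne hν hν₀ (n+1); push_cast at this; rwa [← add_assoc] at this
    have hcn : (0:ℝ) ≤ n := Nat.cast_nonneg n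
    have hEn1 : 2*ν - ε + 1 + (n:ℝ) ≠ 0 := by intro h; linarith
    have hEn2 : 2*ν - ε + 2 + (n:ℝ) ≠ 0 := by intro h; linarith
    have hD : (∏ i ∈ range n, (2*(ν + (i:ℝ)))) ≠ 0 :=
      Finset.prod_ne_zero_iff.mpr fun i _ =>
        mul_ne_zero two_ne_zero (nu_add_ne hν hν₀ i)
    have hE : (∏ i ∈ range n, (2*ν - ε + 1 + (i:ℝ))) ≠ 0 :=
      Finset.prod_ne_zero_iff.mpr fun i _ => by
        have : (0:ℝ) ≤ i := Nat.cast_nonneg i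
        intro h; linarith
    set g := (2:ℝ) ^ (2*ν - ε) with hg
    set Γ1 := Real.Gamma (ν + 1/2) with hΓ1d
    set Γ2 := Real.Gamma (ν - ε + 1/2) with hΓ2d
    set Γ3 := Real.Gamma (2*ν - ε + 1) with hΓ3d
    set A := ∏ i ∈ range n, (2*ν + (i:ℝ)) with hAd
    set B := ∏ i ∈ range n, (ε + (i:ℝ)) with hBd
    set D := ∏ i ∈ range n, (2*(ν + (i:ℝ))) with hDd
    set E := ∏ i ∈ range n, (2*ν - ε + 1 + (i:ℝ)) with hEd
    set m := (n:ℝ) with hm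
    clear_value g Γ1 Γ2 Γ3 A B D E m
    exact key_alg hΓ3 hD hE h5 hn0 hn1 hEn1 hEn2


private lemma ultraP_eval_one (ν : ℝ) (hν : -(1/2) < ν) (hν₀ : ν ≠ 0) (n : ℕ) :
    (ultraP ν n).eval 1 =
      (∏ i ∈ range n, (2*ν + (i:ℝ))) / (∏ i ∈ range n, (2*(ν + (i:ℝ)))) := by
  induction n using Nat.twoStepInduction with
  | zero => simp [ultraP]
  | one =>
    have h2ν : (2:ℝ)*ν ≠ 0 := by simpa using hν₀
    simp only [ultraP, eval_X, prod_range_one]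
    push_cast
    rw [add_zero, add_zero, div_self h2ν]
  | more n ih ih1 =>
    have hn0 := nu_add_ne hν hν₀ n
    have hn1 : ν + (n:ℝ) + 1 ≠ 0 := by
      have := nu_add_ne hν hν₀ (n+1); push_cast at this; rwa [← add_assoc] at this
    have hD : (∏ i ∈ range n, (2*(ν + (i:ℝ)))) ≠ 0 :=
      Finset.prod_ne_zero_iff.mpr fun i _ =>
        mul_ne_zero two_ne_zero (nu_add_ne hν hν₀ i)
    have hβ : ultraBeta ν (n+1)
        = ((n:ℝ)+1) * ((n:ℝ) + 2*ν) / (4 * (ν + n + 1) * (ν + n)) := by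
      simp only [ultraBeta]; push_cast; ring
    simp only [ultraP, eval_sub, eval_mul, eval_X, eval_C, one_mul]
    rw [ih, ih1, hβ]
    simp only [Finset.prod_range_succ]
    push_cast
    have h2 : (2:ℝ) * (ν + (n:ℝ)) ≠ 0 := mul_ne_zero two_ne_zero hn0
    have h3 : (2:ℝ) * (ν + ((n:ℝ) + 1)) ≠ 0 :=
      mul_ne_zero two_ne_zero (by intro h; apply hn1; linarith)
    have hn1' : ν + ((n:ℝ) + 1) ≠ 0 := by intro h; apply hn1; linarith
    field_simp
    ring

theorem ultraspherical_weighted_integral (ν : ℝ) (hν : -(1 / 2) < ν) (hν₀ : ν ≠ 0)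
    (ε : ℝ) (hε₀ : 0 < ε) (hε₁ : ε < ν + 1 / 2) (n : ℕ) :
    ∫ x in Set.Icc (-1 : ℝ) 1,
        (ultraP ν n).eval x * (1 - x ^ 2) ^ (ν - 1 / 2) * (1 - x) ^ (-ε) =
      (ultraP ν n).eval 1 *
        (2 ^ (2 * ν - ε) * Real.Gamma (ν + 1 / 2) * Real.Gamma (ν - ε + 1 / 2) *
          Real.Gamma (n + ε)) / (Real.Gamma ε * Real.Gamma (n + 2 * ν - ε + 1)) := by
  have hL : (∫ x in Set.Icc (-1:ℝ) 1,
        (ultraP ν n).eval x * (1 - x^2) ^ (ν - 1/2) * (1-x) ^ (-ε))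
      = ∫ x in (-1:ℝ)..1,
          (ultraP ν n).eval x * ((1-x) ^ (ν - 1/2 - ε) * (1+x) ^ (ν - 1/2)) := by
    rw [MeasureTheory.integral_Icc_eq_integral_Ioo,
      intervalIntegral.integral_of_le (by norm_num : (-1:ℝ) ≤ 1),
      MeasureTheory.integral_Ioc_eq_integral_Ioo]
    refine MeasureTheory.setIntegral_congr_fun measurableSet_Ioo fun x hx => ?_
    have h1 : (0:ℝ) < 1 - x := by linarith [hx.2]
    have h2 : (0:ℝ) < 1 + x := by linarith [hx.1]
    rw [show (1:ℝ) - x^2 = (1-x)*(1+x) by ring, Real.mul_rpow h1.le h2.le,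
      show ν - 1/2 - ε = (ν - 1/2) + (-ε) by ring, Real.rpow_add h1]
    ring
  rw [hL, key ν hν hν₀ n ε hε₁, ultraP_eval_one ν hν hν₀ n]
  have hg1 : Real.Gamma ((n:ℝ) + ε) = Real.Gamma ε * ∏ i ∈ range n, (ε + (i:ℝ)) := by
    rw [show (n:ℝ) + ε = ε + n by ring]; exact Gamma_add_nat hε₀ n
  have hg2 : Real.Gamma ((n:ℝ) + 2*ν - ε + 1)
      = Real.Gamma (2*ν - ε + 1) * ∏ i ∈ range n, (2*ν - ε + 1 + (i:ℝ)) := by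
    rw [show (n:ℝ) + 2*ν - ε + 1 = (2*ν - ε + 1) + n by ring]
    exact Gamma_add_nat (by linarith) n
  rw [hg1, hg2]
  have hΓε : Real.Gamma ε ≠ 0 := (Real.Gamma_pos_of_pos hε₀).ne'
  have hΓ3 : Real.Gamma (2*ν - ε + 1) ≠ 0 :=
    (Real.Gamma_pos_of_pos (by linarith)).ne'
  have hD : (∏ i ∈ range n, (2*(ν + (i:ℝ)))) ≠ 0 :=
    Finset.prod_ne_zero_iff.mpr fun i _ =>
      mul_ne_zero two_ne_zero (nu_add_ne hν hν₀ i)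
  have hE : (∏ i ∈ range n, (2*ν - ε + 1 + (i:ℝ))) ≠ 0 :=
    Finset.prod_ne_zero_iff.mpr fun i _ => by
      have : (0:ℝ) ≤ i := Nat.cast_nonneg i
      intro h; linarith
  field_simp

end
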